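/- In a directed-complete cone, scalar multiplication is Scott-continuous: for any directed subset K of ℝ≥0 bounded above and any directed bounded subset E of C, sup{λ·x : λ ∈ K, x ∈ E} = (sup K)·(sup E). -/

import Mathlib

class PCone (C : Type*) extends AddCommMonoid C, Module NNReal C where
  cnorm : C → NNReal
  add_left_cancel' : ∀ x y y' : C, x + y = x + y' → y = y'
  cnorm_smul : ∀ (a : NNReal) (x : C), cnorm (a • x) = a * cnorm x
  cnorm_add_le : ∀ x y : C, cnorm (x + y) ≤ cnorm x + cnorm y
  cnorm_eq_zero : ∀ x : C, cnorm x = 0 → x = 0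
  cnorm_le_add : ∀ x y : C, cnorm x ≤ cnorm (x + y)

/-- The cone order: `x ≤ y` iff `y = x + z` for some `z`. -/
def cle {C : Type*} [PCone C] (x y : C) : Prop := ∃ z : C, y = x + z

/-- `b` is an upper bound of `s` for the cone order. -/
def IsUBc {C : Type*} [PCone C] (s : Set C) (b : C) : Prop := ∀ a ∈ s, cle a b

/-- `j` is a least upper bound of `s` for the cone order. -/
def IsLUBc {C : Type*} [PCone C] (s : Set C) (j : C) : Prop :=
  IsUBc s j ∧ ∀ b, IsUBc s b → cle j b

/-- `b` is a lower bound of `s` for the cone order. -/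
def IsLBc {C : Type*} [PCone C] (s : Set C) (b : C) : Prop := ∀ a ∈ s, cle b a

/-- `g` is a greatest lower bound of `s` for the cone order. -/
def IsGLBc {C : Type*} [PCone C] (s : Set C) (g : C) : Prop :=
  IsLBc s g ∧ ∀ b, IsLBc s b → cle b g

/-- `D` is directed for the cone order. -/
def DirC {C : Type*} [PCone C] (D : Set C) : Prop :=
  D.Nonempty ∧ ∀ x ∈ D, ∀ y ∈ D, ∃ z ∈ D, cle x z ∧ cle y z

/-- `D` is directed for the reverse cone order. -/
def RevDirC {C : Type*} [PCone C] (D : Set C) : Prop :=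
  D.Nonempty ∧ ∀ x ∈ D, ∀ y ∈ D, ∃ z ∈ D, cle z x ∧ cle z y


section Aux
variable {C : Type*} [PCone C]
open PCone

lemma cle_refl (x : C) : cle x x := ⟨0, (add_zero x).symm⟩

lemma cle_zero' (x : C) : cle 0 x := ⟨x, (zero_add x).symm⟩

lemma cle_trans {x y z : C} (h1 : cle x y) (h2 : cle y z) : cle x z := by
  obtain ⟨u, rfl⟩ := h1; obtain ⟨v, rfl⟩ := h2
  exact ⟨u + v, add_assoc x u v⟩

lemma cle_smul (a : NNReal) {x y : C} (h : cle x y) : cle (a • x) (a • y) := by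
  obtain ⟨z, rfl⟩ := h; exact ⟨a • z, smul_add a x z⟩

lemma smul_le_smul_of_le {a b : NNReal} (h : a ≤ b) (x : C) : cle (a • x) (b • x) :=
  ⟨(b - a) • x, by rw [← add_smul, add_tsub_cancel_of_le h]⟩

/-- lub's of sets bounded in norm by `M` exist. -/
lemma exists_lub_of_bdd
    (hdc : ∀ D : Set C, (∀ x ∈ D, PCone.cnorm x ≤ 1) → DirC D →
      ∃ s : C, PCone.cnorm s ≤ 1 ∧ IsLUBc D s)
    (D : Set C) (M : NNReal) (hbd : ∀ x ∈ D, cnorm x ≤ M) (hdir : DirC D) :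
    ∃ s : C, IsLUBc D s := by
  rcases eq_or_ne M 0 with rfl | hM
  · refine ⟨0, ?_, fun b _ => cle_zero' b⟩
    intro a ha
    have : a = 0 := cnorm_eq_zero a (le_antisymm (hbd a ha) zero_le)
    rw [this]; exact cle_refl 0
  · set D' : Set C := (fun x => M⁻¹ • x) '' D with hD'
    have hdir' : DirC D' := by
      refine ⟨hdir.1.image _, ?_⟩
      rintro _ ⟨x, hx, rfl⟩ _ ⟨y, hy, rfl⟩
      obtain ⟨z, hz, hxz, hyz⟩ := hdir.2 x hx y hy
      exact ⟨M⁻¹ • z, ⟨z, hz, rfl⟩, cle_smul _ hxz, cle_smul _ hyz⟩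
    have hbd' : ∀ x ∈ D', cnorm x ≤ 1 := by
      rintro _ ⟨x, hx, rfl⟩
      rw [cnorm_smul]
      calc M⁻¹ * cnorm x ≤ M⁻¹ * M := mul_le_mul_right (hbd x hx) _
        _ = 1 := inv_mul_cancel₀ hM
    obtain ⟨s', -, hub', hlub'⟩ := hdc D' hbd' hdir'
    have hMM : ∀ x : C, M • M⁻¹ • x = x := fun x => by
      rw [smul_smul, mul_inv_cancel₀ hM, one_smul]
    refine ⟨M • s', ?_, ?_⟩
    · intro x hx
      have := cle_smul M (hub' (M⁻¹ • x) ⟨x, hx, rfl⟩)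
      rwa [hMM] at this
    · intro b hb
      have : IsUBc D' (M⁻¹ • b) := by
        rintro _ ⟨x, hx, rfl⟩
        exact cle_smul _ (hb x hx)
      have := cle_smul M (hlub' _ this)
      rwa [hMM] at this

/-- Key lemma: if `b` bounds `l • y` for all `l ∈ K` then `κ • y ≤ b`. -/
lemma scalar_sup
    (hdc : ∀ D : Set C, (∀ x ∈ D, PCone.cnorm x ≤ 1) → DirC D →
      ∃ s : C, PCone.cnorm s ≤ 1 ∧ IsLUBc D s)
    (K : Set NNReal) (hK : K.Nonempty) (hKdir : DirectedOn (· ≤ ·) K)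
    (κ : NNReal) (hκ : IsLUB K κ) (y : C) (b : C)
    (hb : ∀ l ∈ K, cle (l • y) b) : cle (κ • y) b := by
  rcases eq_or_ne (cnorm y) 0 with hy | hy
  · have : y = 0 := cnorm_eq_zero y hy
    rw [this, smul_zero]; exact cle_zero' b
  set D : Set C := {w | ∃ l ∈ K, w = l • y} with hD
  have hdir : DirC D := by
    obtain ⟨l0, hl0⟩ := hK
    refine ⟨⟨l0 • y, l0, hl0, rfl⟩, ?_⟩
    rintro _ ⟨l, hl, rfl⟩ _ ⟨l', hl', rfl⟩
    obtain ⟨m, hm, hlm, hl'm⟩ := hKdir l hl l' hl'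
    exact ⟨m • y, ⟨m, hm, rfl⟩, smul_le_smul_of_le hlm y, smul_le_smul_of_le hl'm y⟩
  have hbd : ∀ x ∈ D, cnorm x ≤ κ * cnorm y := by
    rintro _ ⟨l, hl, rfl⟩
    rw [cnorm_smul]
    exact mul_le_mul_left (hκ.1 hl) _
  obtain ⟨s, hub, hlub⟩ := exists_lub_of_bdd hdc D (κ * cnorm y) hbd hdir
  have hsκ : cle s (κ • y) := by
    refine hlub _ ?_
    rintro _ ⟨l, hl, rfl⟩
    exact smul_le_smul_of_le (hκ.1 hl) y
  obtain ⟨r, hr⟩ := hsκ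
  have key : ∀ δ : NNReal, 0 < δ → cnorm r ≤ δ * cnorm y := by
    intro δ hδ
    have hl : ∃ l ∈ K, κ ≤ l + δ := by
      by_cases hκδ : κ ≤ δ
      · obtain ⟨l, hl⟩ := hK
        exact ⟨l, hl, le_add_of_le_right hκδ⟩
      · push_neg at hκδ
        have h1 : κ - δ < κ := tsub_lt_self (lt_trans hδ hκδ) hδ
        obtain ⟨l, hl, hlt⟩ := hκ.exists_between h1
        exact ⟨l, hl, by
          have := hlt.1.le
          calc κ = κ - δ + δ := (tsub_add_cancel_of_le hκδ.le).symm
            _ ≤ l + δ := add_le_add_left this δ⟩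
    obtain ⟨l, hlK, hlδ⟩ := hl
    obtain ⟨z, hz⟩ := hub (l • y) ⟨l, hlK, rfl⟩
    have hlκ : l ≤ κ := hκ.1 hlK
    have heq : l • y + (z + r) = l • y + (κ - l) • y := by
      rw [← add_assoc, ← hz, ← hr, ← add_smul, add_tsub_cancel_of_le hlκ]
    have hzr : z + r = (κ - l) • y := PCone.add_left_cancel' _ _ _ heq
    calc cnorm r ≤ cnorm (r + z) := cnorm_le_add r z
      _ = cnorm ((κ - l) • y) := by rw [add_comm, hzr]
      _ = (κ - l) * cnorm y := cnorm_smul _ _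
      _ ≤ δ * cnorm y := by
          refine mul_le_mul_left ?_ _
          exact tsub_le_iff_right.mpr (by rwa [add_comm])
  have hr0 : r = 0 := by
    refine cnorm_eq_zero r ?_
    by_contra h
    have hpos : 0 < cnorm r := pos_iff_ne_zero.mpr h
    have hypos : 0 < cnorm y := pos_iff_ne_zero.mpr hy
    have := key (cnorm r / (2 * cnorm y)) (by positivity)
    have heq2 : cnorm r / (2 * cnorm y) * cnorm y = cnorm r / 2 := by
      rw [div_mul_eq_mul_div, mul_comm 2 (cnorm y), ← div_div,
        mul_div_assoc, div_self hy, mul_one]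
    rw [heq2] at this
    exact absurd this (not_le.mpr (NNReal.half_lt_self h))
  have : κ • y = s := by rw [hr, hr0, add_zero]
  rw [this]
  refine hlub b ?_
  rintro _ ⟨l, hl, rfl⟩
  exact hb l hl

end Aux

/-- In a directed-complete cone, scalar multiplication is Scott-continuous:
`sup {λ • x : λ ∈ K, x ∈ E} = (sup K) • (sup E)` for a directed bounded-above
`K ⊆ ℝ≥0` and a directed bounded `E ⊆ C`. -/
theorem smul_scott_continuous {C : Type*} [PCone C]
    (hdc : ∀ D : Set C, (∀ x ∈ D, PCone.cnorm x ≤ 1) → DirC D →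
      ∃ s : C, PCone.cnorm s ≤ 1 ∧ IsLUBc D s)
    (K : Set NNReal) (hK : K.Nonempty) (hKdir : DirectedOn (· ≤ ·) K)
    (κ : NNReal) (hκ : IsLUB K κ)
    (E : Set C) (hE : DirC E) (hEbdd : ∃ b : C, IsUBc E b)
    (sE : C) (hsE : IsLUBc E sE) :
    IsLUBc {w : C | ∃ l ∈ K, ∃ x ∈ E, w = l • x} (κ • sE) := by
  constructor
  · rintro _ ⟨l, hl, x, hx, rfl⟩
    exact cle_trans (cle_smul l (hsE.1 x hx)) (smul_le_smul_of_le (hκ.1 hl) sE)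
  · intro b hb
    refine scalar_sup hdc K hK hKdir κ hκ sE b ?_
    intro l hl
    rcases eq_or_ne l 0 with rfl | hl0
    · rw [zero_smul]; exact cle_zero' b
    · have hub : IsUBc E (l⁻¹ • b) := by
        intro x hx
        obtain ⟨w, hw⟩ := hb (l • x) ⟨l, hl, x, hx, rfl⟩
        exact ⟨l⁻¹ • w, by
          rw [hw, smul_add, smul_smul, inv_mul_cancel₀ hl0, one_smul]⟩
      have := cle_smul l (hsE.2 _ hub)
      rwa [smul_smul, mul_inv_cancel₀ hl0, one_smul] at this
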